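/- Let A be a commutative ring, d ∈ A, φ : A → A a ring homomorphism, and N an A-module; write φ*N = A ⊗_{A,φ} N. Let F : φ*N → N be an injective A-linear map with d·N ⊆ F(φ*N). Then there exists a unique A-linear map V : N → φ*N with F∘V = d·id_N, and this V automatically satisfies V∘F = d·id_{φ*N}. -/
import Mathlib


/-- Breuil–Kisin windows vs generalized Breuil windows, converse direction: if
`F : φ*N → N` is an injective `A`-linear map with `d·N ⊆ F(φ*N)` (where `φ*N` is the base
change of `N` along `φ`, characterized by its universal property among `φ`-semilinear maps
out of `N`), then there is a unique `A`-linear `V : N → φ*N` with `F∘V = d·id`, and this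
`V` automatically satisfies `V∘F = d·id`. -/
theorem stmt_9 (A : Type) [CommRing A] (d : A) (φ : A →+* A)
    (N : Type) [AddCommGroup N] [Module A N]
    (Nφ : Type) [AddCommGroup Nφ] [Module A Nφ]
    (j : N →ₛₗ[φ] Nφ)
    (huniv : ∀ (P : Type) [AddCommGroup P] [Module A P] (f : N →ₛₗ[φ] P),
      ∃! g : Nφ →ₗ[A] P, ∀ x : N, g (j x) = f x)
    (F : Nφ →ₗ[A] N)
    (hF : Function.Injective F)
    (hrange : ∀ x : N, ∃ y : Nφ, F y = d • x) :
    ∃ V : N →ₗ[A] Nφ,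
      (∀ x : N, F (V x) = d • x) ∧
      (∀ y : Nφ, V (F y) = d • y) ∧
      (∀ V' : N →ₗ[A] Nφ, (∀ x : N, F (V' x) = d • x) → V' = V) := by
  classical
  have hv : ∀ x : N, F (Classical.choose (hrange x)) = d • x :=
    fun x => Classical.choose_spec (hrange x)
  refine ⟨{ toFun := fun x => Classical.choose (hrange x)
            map_add' := fun x y => hF (by rw [hv, map_add, hv, hv, smul_add])
            map_smul' := fun a x => hF (by
              rw [hv, RingHom.id_apply, map_smul, hv, smul_comm d a]) },
    fun x => hv x, fun y => hF (by simp only [LinearMap.coe_mk, AddHom.coe_mk]; rw [hv, map_smul]), fun V' h => ?_⟩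
  ext x
  exact hF (by simp only [LinearMap.coe_mk, AddHom.coe_mk]; rw [h, hv])
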